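/- Let S = μ/λ be a strip between k-shapes and let M be a column move from μ to some k-shape ν such that ν/λ is again a strip (i.e., M is a λ-augmentation column move of S). Then M has rank 1. -/

import Mathlib

open scoped Classical

/-! ## Basic objects: cells, partitions, hooks, `k`-boundary, `k`-shapes -/

abbrev Cell : Type := ℕ × ℕ

/-- A partition, encoded as a weakly decreasing, eventually zero function `ℕ → ℕ`
(rows are 0-indexed; a larger row index means a higher row, French convention). -/
def IsPartition (f : ℕ → ℕ) : Prop :=
  (∀ i j : ℕ, i ≤ j → f j ≤ f i) ∧ ∃ N : ℕ, ∀ i : ℕ, N ≤ i → f i = 0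

/-- The cells of the Ferrers diagram of `f`: `(i, j)` with `j < f i` (0-indexed). -/
def cellsOf (f : ℕ → ℕ) : Set Cell := {p : Cell | p.2 < f p.1}

/-- The conjugate: number of rows with at least `j + 1` cells. -/
noncomputable def conj (f : ℕ → ℕ) (j : ℕ) : ℕ := Nat.card {i : ℕ // j < f i}

/-- Hook length of the cell `p` of `f` (0-indexed version of
`(λ_i − j) + (λ^t_j − i) + 1`). -/
noncomputable def hook (f : ℕ → ℕ) (p : Cell) : ℕ :=
  (f p.1 - p.2) + (conj f p.2 - p.1) - 1

/-- The `k`-boundary: cells of `f` with hook length at most `k`. -/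
def bdry (k : ℕ) (f : ℕ → ℕ) : Set Cell := {p : Cell | p ∈ cellsOf f ∧ hook f p ≤ k}

/-- `k`-row shape: the number of cells of the `k`-boundary in row `i`. -/
noncomputable def rsK (k : ℕ) (f : ℕ → ℕ) (i : ℕ) : ℕ :=
  Nat.card {j : ℕ // (i, j) ∈ bdry k f}

/-- `k`-column shape: the number of cells of the `k`-boundary in column `j`. -/
noncomputable def csK (k : ℕ) (f : ℕ → ℕ) (j : ℕ) : ℕ :=
  Nat.card {i : ℕ // (i, j) ∈ bdry k f}

/-- A `k`-shape: a partition whose `k`-row shape and `k`-column shape are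
weakly decreasing. -/
def IsKShape (k : ℕ) (f : ℕ → ℕ) : Prop :=
  IsPartition f ∧ (∀ i j : ℕ, i ≤ j → rsK k f j ≤ rsK k f i) ∧
    ∀ i j : ℕ, i ≤ j → csK k f j ≤ csK k f i

/-- A `k`-core: a partition with no cell of hook length exactly `k`. -/
def IsKCore (k : ℕ) (f : ℕ → ℕ) : Prop :=
  IsPartition f ∧ ∀ p ∈ cellsOf f, hook f p ≠ k

/-! ## Strings and moves -/

/-- Diagonal index of a cell. -/
def diagIdx (p : Cell) : ℤ := (p.2 : ℤ) - (p.1 : ℤ)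

/-- Two cells are contiguous when their diagonal indices differ by `k` or `k+1`. -/
def Contiguous (k : ℕ) (p q : Cell) : Prop :=
  (diagIdx p - diagIdx q).natAbs = k ∨ (diagIdx p - diagIdx q).natAbs = k + 1

/-- `a` lists the cells of the skew shape `g / f` from top to bottom, with
successive cells contiguous and in strictly lower rows: a string. -/
def IsString (k : ℕ) (f g : ℕ → ℕ) (a : List Cell) : Prop :=
  IsPartition f ∧ IsPartition g ∧ (∀ i, f i ≤ g i) ∧ a ≠ [] ∧
    cellsOf g \ cellsOf f = {x : Cell | x ∈ a} ∧
    List.Chain' (fun x y : Cell => y.1 < x.1 ∧ Contiguous k x y) a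

/-- `b` is the leftmost cell of the `k`-boundary of `f` in row `r`. -/
def IsLeftmostBdryInRow (k : ℕ) (f : ℕ → ℕ) (r : ℕ) (b : Cell) : Prop :=
  b ∈ bdry k f ∧ b.1 = r ∧ ∀ c : ℕ, (r, c) ∈ bdry k f → b.2 ≤ c

/-- `b` is the bottom cell of the `k`-boundary of `f` in column `c`. -/
def IsBottomBdryInCol (k : ℕ) (f : ℕ → ℕ) (c : ℕ) (b : Cell) : Prop :=
  b ∈ bdry k f ∧ b.2 = c ∧ ∀ r : ℕ, (r, c) ∈ bdry k f → b.1 ≤ r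

/-- The cell `b₀` (the leftmost boundary cell in the row of the top cell of the
string `a`) exists and has hook length exactly `k`. -/
def B0HookK (k : ℕ) (f : ℕ → ℕ) (a : List Cell) : Prop :=
  ∃ h b : Cell, a.head? = some h ∧ IsLeftmostBdryInRow k f h.1 b ∧ hook f b = k

/-- The cell `b_ℓ` (the bottom boundary cell in the column of the bottom cell of
the string `a`) exists and has hook length exactly `k`. -/
def BlHookK (k : ℕ) (f : ℕ → ℕ) (a : List Cell) : Prop :=
  ∃ h b : Cell, a.getLast? = some h ∧ IsBottomBdryInCol k f h.2 b ∧ hook f b = k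

def RowType (k : ℕ) (f : ℕ → ℕ) (a : List Cell) : Prop := B0HookK k f a ∧ ¬ BlHookK k f a

def ColType (k : ℕ) (f : ℕ → ℕ) (a : List Cell) : Prop := ¬ B0HookK k f a ∧ BlHookK k f a

def CoverType (k : ℕ) (f : ℕ → ℕ) (a : List Cell) : Prop := ¬ B0HookK k f a ∧ ¬ BlHookK k f a

def CocoverType (k : ℕ) (f : ℕ → ℕ) (a : List Cell) : Prop := B0HookK k f a ∧ BlHookK k f a

/-- `k`-row shape extended to integer row indices (0 outside `ℕ`). -/
noncomputable def rsZ (k : ℕ) (f : ℕ → ℕ) (r : ℤ) : ℤ :=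
  if 0 ≤ r then (rsK k f r.toNat : ℤ) else 0

/-- `k`-column shape extended to integer column indices (0 outside `ℕ`). -/
noncomputable def csZ (k : ℕ) (f : ℕ → ℕ) (c : ℤ) : ℤ :=
  if 0 ≤ c then (csK k f c.toNat : ℤ) else 0

/-- The strings `a = g/f` and `b = g'/f'` are translates of each other: the
cells correspond under translation by a fixed vector `v`, the row/column shape
changes correspond under `v`, and corresponding modified rows/columns have the
same size. -/
def TranslateStrings (k : ℕ) (f g f' g' : ℕ → ℕ) (a b : List Cell) : Prop :=
  ∃ v : ℤ × ℤ, a.length = b.length ∧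
    (∀ (i : ℕ) (x y : Cell), a[i]? = some x → b[i]? = some y →
      (y.1 : ℤ) = (x.1 : ℤ) + v.1 ∧ (y.2 : ℤ) = (x.2 : ℤ) + v.2) ∧
    (∀ r : ℤ, rsZ k g r - rsZ k f r = rsZ k g' (r + v.1) - rsZ k f' (r + v.1) ∧
      (rsZ k g r ≠ rsZ k f r → rsZ k f r = rsZ k f' (r + v.1))) ∧
    (∀ c : ℤ, csZ k g c - csZ k f c = csZ k g' (c + v.2) - csZ k f' (c + v.2) ∧
      (csZ k g c ≠ csZ k f c → csZ k f c = csZ k f' (c + v.2)))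

/-- The common data of a row or column move from `lam` to `mu`: a chain of
partitions `lam = shape 0 ⊂ shape 1 ⊂ ⋯ ⊂ shape rank = mu` whose successive
differences are strings of a common length that are translates of each other,
with `lam` and `mu` both `k`-shapes. -/
structure PreMove (k : ℕ) (lam mu : ℕ → ℕ) where
  rank : ℕ
  len : ℕ
  rank_pos : 0 < rank
  len_pos : 0 < len
  shape : ℕ → ℕ → ℕ
  strs : ℕ → List Cell
  shape_zero : shape 0 = lam
  shape_rank : shape rank = mu
  src_kshape : IsKShape k lam
  tgt_kshape : IsKShape k mu
  isStr : ∀ i < rank, IsString k (shape i) (shape (i + 1)) (strs i)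
  strLen : ∀ i < rank, (strs i).length = len
  translates : ∀ i < rank, ∀ j < rank,
    TranslateStrings k (shape i) (shape (i + 1)) (shape j) (shape (j + 1)) (strs i) (strs j)

/-- A row move: all strings are row-type and their top cells occur in
consecutive columns from left to right. -/
def PreMove.IsRowMove {k : ℕ} {lam mu : ℕ → ℕ} (m : PreMove k lam mu) : Prop :=
  (∀ i < m.rank, RowType k (m.shape i) (m.strs i)) ∧
    ∀ i : ℕ, i + 1 < m.rank → ∀ x y : Cell,
      (m.strs i).head? = some x → (m.strs (i + 1)).head? = some y → y.2 = x.2 + 1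

/-- A column move: all strings are column-type and their bottom cells occur in
consecutive rows from bottom to top. -/
def PreMove.IsColMove {k : ℕ} {lam mu : ℕ → ℕ} (m : PreMove k lam mu) : Prop :=
  (∀ i < m.rank, ColType k (m.shape i) (m.strs i)) ∧
    ∀ i : ℕ, i + 1 < m.rank → ∀ x y : Cell,
      (m.strs i).getLast? = some x → (m.strs (i + 1)).getLast? = some y → y.1 = x.1 + 1

/-- A move is a row move or a column move. -/
def PreMove.IsMove {k : ℕ} {lam mu : ℕ → ℕ} (m : PreMove k lam mu) : Prop :=
  m.IsRowMove ∨ m.IsColMove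

/-- There is a move from `lam` to `mu`. -/
def MoveRel (k : ℕ) (lam mu : ℕ → ℕ) : Prop := ∃ m : PreMove k lam mu, m.IsMove

/-- A `f`-addable corner: a cell outside `f` which together with `f` forms the
diagram of a partition. -/
def IsAddableCorner (f : ℕ → ℕ) (x : Cell) : Prop :=
  x ∉ cellsOf f ∧ ∃ g : ℕ → ℕ, IsPartition g ∧ cellsOf g = cellsOf f ∪ {x}

/-! ## Strips -/

/-- The skew shape `g / f` has at most one cell in each column. -/
def OneCellPerCol (f g : ℕ → ℕ) : Prop :=
  ∀ x y : Cell, x ∈ cellsOf g \ cellsOf f → y ∈ cellsOf g \ cellsOf f → x.2 = y.2 → x = y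

/-- The skew shape `g / f` has at most one cell in each row. -/
def OneCellPerRow (f g : ℕ → ℕ) : Prop :=
  ∀ x y : Cell, x ∈ cellsOf g \ cellsOf f → y ∈ cellsOf g \ cellsOf f → x.1 = y.1 → x = y

/-- `mu / lam` is a strip of rank `r` of `k`-shapes: a horizontal strip such
that `rs(mu)/rs(lam)` is a horizontal strip and `cs(mu)/cs(lam)` is a vertical
strip, both of size `r`. -/
def IsStrip (k r : ℕ) (lam mu : ℕ → ℕ) : Prop :=
  IsKShape k lam ∧ IsKShape k mu ∧ (∀ i, lam i ≤ mu i) ∧ OneCellPerCol lam mu ∧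
    (∀ i, rsK k lam i ≤ rsK k mu i) ∧ OneCellPerCol (rsK k lam) (rsK k mu) ∧
    (∀ j, csK k lam j ≤ csK k mu j) ∧ OneCellPerRow (csK k lam) (csK k mu) ∧
    (∑ᶠ i : ℕ, (rsK k mu i - rsK k lam i)) = r ∧
    (∑ᶠ j : ℕ, (csK k mu j - csK k lam j)) = r

/-- `mu / lam` is a strip (of some rank). -/
def IsStripAny (k : ℕ) (lam mu : ℕ → ℕ) : Prop := ∃ r : ℕ, IsStrip k r lam mu

/-- A maximal strip: it admits no `lam`-augmentation move. -/
def MaximalStrip (k : ℕ) (lam mu : ℕ → ℕ) : Prop :=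
  IsStripAny k lam mu ∧ ¬ ∃ nu : ℕ → ℕ, MoveRel k mu nu ∧ IsStripAny k lam nu

/-- A reverse-maximal strip `mu / rho`: there is no move from `rho` to a
`k`-shape `rho'` with `mu / rho'` again a strip. -/
def ReverseMaximalStrip (k : ℕ) (rho mu : ℕ → ℕ) : Prop :=
  IsStripAny k rho mu ∧ ¬ ∃ rho' : ℕ → ℕ, MoveRel k rho rho' ∧ IsStripAny k rho' mu

/-- Adjoin the cell `a` at the end of its row. -/
def addCell (f : ℕ → ℕ) (a : Cell) : ℕ → ℕ := Function.update f a.1 (f a.1 + 1)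

/-- A lower augmentable corner of the strip `mu / lam`: a `mu`-addable corner
`a` whose adjunction expels from the `k`-boundary a cell of `∂mu` in the row of
`a` and in a modified column of the strip. -/
def LowerAugCorner (k : ℕ) (lam mu : ℕ → ℕ) (a : Cell) : Prop :=
  IsAddableCorner mu a ∧ ∃ b : Cell, b ∈ bdry k mu ∧ b.1 = a.1 ∧
    csK k mu b.2 = csK k lam b.2 + 1 ∧ k < hook (addCell mu a) b

/-- An upper augmentable corner of the strip `mu / lam`: a `mu`-addable corner
`a`, not lying directly on top of a cell of the strip, whose adjunction expels
from the `k`-boundary a cell of `∂mu` in the column of `a` and in a modified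
row of the strip. -/
def UpperAugCorner (k : ℕ) (lam mu : ℕ → ℕ) (a : Cell) : Prop :=
  IsAddableCorner mu a ∧ (a.1 = 0 ∨ (a.1 - 1, a.2) ∉ cellsOf mu \ cellsOf lam) ∧
    ∃ b : Cell, b ∈ bdry k mu ∧ b.2 = a.2 ∧
      rsK k mu b.1 = rsK k lam b.1 + 1 ∧ k < hook (addCell mu a) b

/-! ## Paths in the `k`-shape poset and their equivalence -/

/-- Charge of a step from `f` to `g`: 0 for a row move or an empty move, the
number of cells for a column move. -/
noncomputable def stepCharge (k : ℕ) (f g : ℕ → ℕ) : ℕ :=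
  if ∃ m : PreMove k f g, m.IsColMove then (cellsOf g \ cellsOf f).ncard else 0

/-- A path in the `k`-shape poset from `lam` to `nu`, recorded by its list of
vertices; each step is an empty move or a move. -/
def IsPathList (k : ℕ) (lam nu : ℕ → ℕ) (p : List (ℕ → ℕ)) : Prop :=
  p.head? = some lam ∧ p.getLast? = some nu ∧
    List.Chain' (fun f g => f = g ∨ MoveRel k f g) p

/-- The charge of a path: the sum of the charges of its steps. -/
noncomputable def pathCharge (k : ℕ) (p : List (ℕ → ℕ)) : ℕ :=
  (List.zipWith (stepCharge k) p p.tail).sum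

/-- The equivalence on paths generated by diamond equivalences (and by
insertion of empty moves). -/
inductive PathEquiv (k : ℕ) : List (ℕ → ℕ) → List (ℕ → ℕ) → Prop
  | refl (p : List (ℕ → ℕ)) : PathEquiv k p p
  | symm {p q : List (ℕ → ℕ)} : PathEquiv k p q → PathEquiv k q p
  | trans {p q r : List (ℕ → ℕ)} : PathEquiv k p q → PathEquiv k q r → PathEquiv k p r
  | pad (pre post : List (ℕ → ℕ)) (κ : ℕ → ℕ) :
      PathEquiv k (pre ++ κ :: post) (pre ++ κ :: κ :: post)
  | diamond (pre post : List (ℕ → ℕ)) (κ μ ν γ : ℕ → ℕ)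
      (h1 : κ = μ ∨ MoveRel k κ μ) (h2 : μ = γ ∨ MoveRel k μ γ)
      (h3 : κ = ν ∨ MoveRel k κ ν) (h4 : ν = γ ∨ MoveRel k ν γ)
      (hcells : (cellsOf μ \ cellsOf κ) ∪ (cellsOf γ \ cellsOf μ)
          = (cellsOf ν \ cellsOf κ) ∪ (cellsOf γ \ cellsOf ν))
      (hcharge : stepCharge k κ μ + stepCharge k μ γ = stepCharge k κ ν + stepCharge k ν γ) :
      PathEquiv k (pre ++ κ :: μ :: γ :: post) (pre ++ κ :: ν :: γ :: post)

/-- The type of paths in the `k`-shape poset from `lam` to `nu`. -/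
def PathsTo (k : ℕ) (lam nu : ℕ → ℕ) : Type :=
  {p : List (ℕ → ℕ) // IsPathList k lam nu p}

def kPathSetoid (k : ℕ) (lam nu : ℕ → ℕ) : Setoid (PathsTo k lam nu) where
  r p q := PathEquiv k p.1 q.1
  iseqv := ⟨fun p => PathEquiv.refl p.1, fun h => PathEquiv.symm h,
    fun h h' => PathEquiv.trans h h'⟩

/-- Equivalence classes of paths from `lam` to `nu` in the `k`-shape poset. -/
def Patheq (k : ℕ) (lam nu : ℕ → ℕ) : Type := Quotient (kPathSetoid k lam nu)

/-! ## Tableaux -/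

/-- A step of a `k`-shape tableau: a strip of rank strictly less than `k`. -/
def StripStep (k : ℕ) (f g : ℕ → ℕ) : Prop := ∃ r : ℕ, r < k ∧ IsStrip k r f g

/-- A `k`-shape tableau of shape `mu / lam`, recorded by its chain of shapes. -/
def IsTableau (k : ℕ) (lam mu : ℕ → ℕ) (T : List (ℕ → ℕ)) : Prop :=
  T.head? = some lam ∧ T.getLast? = some mu ∧ List.Chain' (StripStep k) T

/-- A maximal `k`-shape tableau: each of its strips is maximal. -/
def IsMaxTableau (k : ℕ) (lam mu : ℕ → ℕ) (T : List (ℕ → ℕ)) : Prop :=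
  IsTableau k lam mu T ∧ List.Chain' (MaximalStrip k) T

/-- A reverse-maximal `k`-shape tableau: each of its strips is reverse-maximal. -/
def IsRevMaxTableau (k : ℕ) (lam mu : ℕ → ℕ) (T : List (ℕ → ℕ)) : Prop :=
  IsTableau k lam mu T ∧ List.Chain' (ReverseMaximalStrip k) T

/-- The rank of the strip `g / f`. -/
noncomputable def stripRank (k : ℕ) (f g : ℕ → ℕ) : ℕ :=
  ∑ᶠ i : ℕ, (rsK k g i - rsK k f i)

/-- The weight of a tableau: the list of ranks of its strips. -/
noncomputable def tabWeight (k : ℕ) (T : List (ℕ → ℕ)) : List ℕ :=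
  List.zipWith (stripRank k) T T.tail

/-- The indent of a cell `b` in the skew shape `mu / lam`: the number of its
cells strictly to the left of `b` in the row of `b`. -/
noncomputable def indent (lam mu : ℕ → ℕ) (b : Cell) : ℕ :=
  Nat.card {x : Cell // x ∈ cellsOf mu \ cellsOf lam ∧ x.1 = b.1 ∧ x.2 < b.2}

/-- A `lam`-augmentation path from `mu` to `nu`: a path in the `k`-shape poset
all of whose vertices `rho` satisfy that `rho / lam` is a strip. -/
def IsAugPath (k : ℕ) (lam mu nu : ℕ → ℕ) (p : List (ℕ → ℕ)) : Prop :=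
  IsPathList k mu nu p ∧ ∀ rho ∈ p, IsStripAny k lam rho

section Statement15Aux
-- card helpers
lemma natcard_iff {P Q : ℕ → Prop} (h : ∀ n, P n ↔ Q n) :
    Nat.card {n // P n} = Nat.card {n // Q n} :=
  Nat.card_congr (Equiv.subtypeEquivRight h)

lemma natcard_insert {P Q : ℕ → Prop} (a : ℕ)
    (h : ∀ n, Q n ↔ n = a ∨ P n) (ha : ¬ P a) (hfin : {n | P n}.Finite) :
    Nat.card {n // Q n} = Nat.card {n // P n} + 1 := by
  have h1 : Nat.card {n // Q n} = ({n | Q n} : Set ℕ).ncard := Nat.card_coe_set_eq _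
  have h2 : Nat.card {n // P n} = ({n | P n} : Set ℕ).ncard := Nat.card_coe_set_eq _
  have hset : {n | Q n} = insert a {n | P n} := by
    ext n; simp only [Set.mem_setOf_eq, Set.mem_insert_iff]; exact h n
  rw [h1, h2, hset]
  exact Set.ncard_insert_of_notMem ha hfin

lemma part_finite {f : ℕ → ℕ} (hf : IsPartition f) (j : ℕ) :
    {i | j < f i}.Finite := by
  obtain ⟨N, hN⟩ := hf.2
  apply Set.Finite.subset (Set.finite_Iio N)
  intro i hi
  simp only [Set.mem_setOf_eq] at hi
  simp only [Set.mem_Iio]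
  by_contra h'
  push_neg at h'
  have := hN i h'
  omega

lemma conj_le {f : ℕ → ℕ} {j p : ℕ}
    (h : ∀ i, j < f i → i < p) : conj f j ≤ p := by
  have h1 : conj f j = ({i | j < f i} : Set ℕ).ncard := Nat.card_coe_set_eq _
  rw [h1]
  calc ({i | j < f i} : Set ℕ).ncard ≤ ((Finset.range p : Finset ℕ) : Set ℕ).ncard := by
        apply Set.ncard_le_ncard
        · intro i hi; simp only [Set.mem_setOf_eq] at hi; simp [h i hi]
        · exact (Finset.range p).finite_toSet
    _ = p := by rw [Set.ncard_coe_finset, Finset.card_range]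

lemma conj_anti {f : ℕ → ℕ} (hf : IsPartition f) {j j' : ℕ} (h : j ≤ j') :
    conj f j' ≤ conj f j := by
  have h1 : conj f j = ({i | j < f i} : Set ℕ).ncard := Nat.card_coe_set_eq _
  have h2 : conj f j' = ({i | j' < f i} : Set ℕ).ncard := Nat.card_coe_set_eq _
  rw [h1, h2]
  exact Set.ncard_le_ncard (fun i hi => lt_of_le_of_lt h hi) (part_finite hf j)

lemma hook_row_lt {f : ℕ → ℕ} (hf : IsPartition f) {p c j : ℕ} (hcj : c < j) (hj : j < f p) :
    hook f (p, j) < hook f (p, c) := by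
  have h1 : conj f j ≤ conj f c := conj_anti hf (le_of_lt hcj)
  show (f p - j) + (conj f j - p) - 1 < (f p - c) + (conj f c - p) - 1
  omega

section StrLems
variable {k : ℕ} {f g : ℕ → ℕ} {a : List Cell}

lemma string_pairwise (hstr : IsString k f g a) :
    List.Pairwise (fun x y : Cell => y.1 < x.1) a := by
  have hc : List.Chain' (fun x y : Cell => y.1 < x.1) a :=
    List.IsChain.imp (fun _ _ h => h.1) hstr.2.2.2.2.2
  haveI : Trans (fun x y : Cell => y.1 < x.1) (fun x y : Cell => y.1 < x.1) (fun x y : Cell => y.1 < x.1) := ⟨fun h1 h2 => lt_trans h2 h1⟩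
  exact List.isChain_iff_pairwise.mp hc

lemma string_mem_diff (hstr : IsString k f g a) {x : Cell} (hx : x ∈ a) :
    x ∈ cellsOf g \ cellsOf f := by
  rw [hstr.2.2.2.2.1]; exact hx

lemma string_row_inj (hstr : IsString k f g a) :
    ∀ x ∈ a, ∀ y ∈ a, x.1 = y.1 → x = y := by
  have hpw : List.Pairwise (fun x y : Cell => x.1 ≠ y.1) a :=
    (string_pairwise hstr).imp (fun h => Nat.ne_of_gt h)
  intro x hx y hy hxy
  by_contra hne
  haveI : Std.Symm (fun x y : Cell => x.1 ≠ y.1) := ⟨fun _ _ h => h.symm⟩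
  exact (hpw.forall hx hy hne) hxy

lemma head_max (hstr : IsString k f g a) {h : Cell} (hh : a.head? = some h) :
    h ∈ a ∧ ∀ x ∈ a, x.1 ≤ h.1 := by
  have hpw := string_pairwise hstr
  cases a with
  | nil => simp at hh
  | cons y tl =>
    simp only [List.head?_cons, Option.some.injEq] at hh
    subst hh
    refine ⟨List.mem_cons_self, ?_⟩
    intro x hx
    rcases List.mem_cons.mp hx with h1 | h2
    · subst h1; exact le_rfl
    · exact le_of_lt ((List.pairwise_cons.mp hpw).1 x h2)

lemma string_cell_eq (hstr : IsString k f g a) {x : Cell} (hx : x ∈ a) :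
    x.2 = f x.1 ∧ g x.1 = f x.1 + 1 := by
  have hxd := string_mem_diff hstr hx
  have h1 : x.2 < g x.1 := hxd.1
  have h2 : f x.1 ≤ x.2 := not_lt.mp hxd.2
  have hinj := string_row_inj hstr
  have hcol : x.2 = f x.1 := by
    by_contra hne
    have hlt : f x.1 < x.2 := lt_of_le_of_ne h2 (Ne.symm hne)
    have hy : ((x.1, x.2 - 1) : Cell) ∈ cellsOf g \ cellsOf f := by
      constructor
      · show x.2 - 1 < g x.1; omega
      · show ¬ (x.2 - 1 < f x.1); omega
    rw [hstr.2.2.2.2.1] at hy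
    have := hinj _ hy _ hx rfl
    have : x.2 - 1 = x.2 := congrArg Prod.snd this
    omega
  refine ⟨hcol, ?_⟩
  by_contra hne
  have hgt : f x.1 + 1 < g x.1 := by omega
  have hz : ((x.1, f x.1 + 1) : Cell) ∈ cellsOf g \ cellsOf f := by
    constructor
    · show f x.1 + 1 < g x.1; omega
    · show ¬ (f x.1 + 1 < f x.1); omega
  rw [hstr.2.2.2.2.1] at hz
  have := hinj _ hz _ hx rfl
  have : f x.1 + 1 = x.2 := congrArg Prod.snd this
  omega

lemma string_row_eq (hstr : IsString k f g a) {σ : ℕ} (hσ : ∀ x ∈ a, x.1 ≠ σ) :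
    g σ = f σ := by
  by_contra hne
  have hlt : f σ < g σ := lt_of_le_of_ne (hstr.2.2.1 σ) (Ne.symm hne)
  have hy : ((σ, f σ) : Cell) ∈ cellsOf g \ cellsOf f := by
    constructor
    · show f σ < g σ; omega
    · show ¬ (f σ < f σ); omega
  rw [hstr.2.2.2.2.1] at hy
  exact hσ _ hy rfl

lemma conj_eq_low (hstr : IsString k f g a) {h : Cell} (hh : a.head? = some h)
    {j : ℕ} (hj : j < f h.1) : conj g j = conj f j := by
  have hmax := (head_max hstr hh).2
  apply natcard_iff
  intro i
  by_cases hrow : ∃ x ∈ a, x.1 = i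
  · obtain ⟨x, hxa, hxi⟩ := hrow
    have hce := string_cell_eq hstr hxa
    have hle : f h.1 ≤ f x.1 := hstr.1.1 x.1 h.1 (hmax x hxa)
    subst hxi
    constructor <;> intro _ <;> omega
  · push_neg at hrow
    rw [string_row_eq hstr hrow]
end StrLems

section MainLems
variable {k : ℕ} {f g : ℕ → ℕ} {a : List Cell}

lemma rs_above (hstr : IsString k f g a) {h : Cell}
    (hh : a.head? = some h) {σ : ℕ} (hσ : h.1 < σ) : rsK k g σ = rsK k f σ := by
  have hmax := (head_max hstr hh).2
  have hrow : g σ = f σ := by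
    apply string_row_eq hstr
    intro x hx
    have := hmax x hx
    omega
  have hfσ : f σ ≤ f h.1 := hstr.1.1 h.1 σ (le_of_lt hσ)
  apply natcard_iff
  intro j
  constructor
  · rintro ⟨hc, hkk⟩
    have hj : j < f σ := by
      have : j < g σ := hc
      omega
    have hcj : conj g j = conj f j := conj_eq_low hstr hh (by omega)
    refine ⟨hj, ?_⟩
    show (f σ - j) + (conj f j - σ) - 1 ≤ k
    have h2 : (g σ - j) + (conj g j - σ) - 1 ≤ k := hkk
    rw [hrow, hcj] at h2
    exact h2
  · rintro ⟨hc, hkk⟩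
    have hj : j < f σ := hc
    have hcj : conj g j = conj f j := conj_eq_low hstr hh (by omega)
    refine ⟨by show j < g σ; omega, ?_⟩
    show (g σ - j) + (conj g j - σ) - 1 ≤ k
    rw [hrow, hcj]
    exact hkk

lemma rs_head (hk : 1 ≤ k) (hstr : IsString k f g a) (hB0 : ¬ B0HookK k f a)
    (hcols : ∀ x ∈ a, ∀ y ∈ a, x.2 = y.2 → x = y)
    {h : Cell} (hh : a.head? = some h) :
    rsK k g h.1 = rsK k f h.1 + 1 := by
  obtain ⟨hha, hmax⟩ := head_max hstr hh
  obtain ⟨hq, hgp⟩ := string_cell_eq hstr hha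
  have hfdec := hstr.1.1
  -- conj at f h.1 increases by 1
  have hconjq : conj g (f h.1) = conj f (f h.1) + 1 := by
    apply natcard_insert h.1
    · intro i
      constructor
      · intro hqg
        by_cases hip : i = h.1
        · exact Or.inl hip
        · right
          by_cases hrow : ∃ x ∈ a, x.1 = i
          · obtain ⟨x, hxa, hxi⟩ := hrow
            have hce1 := (string_cell_eq hstr hxa).1
            have hce2 := (string_cell_eq hstr hxa).2
            have hxh : x ≠ h := by
              intro hxh; rw [hxh] at hxi; exact hip hxi.symm
            have hxcol : x.2 ≠ h.2 := fun hc => hxh (hcols x hxa h hha hc)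
            have hle : f h.1 ≤ f x.1 := hfdec x.1 h.1 (hmax x hxa)
            subst hxi
            omega
          · push_neg at hrow
            rw [string_row_eq hstr hrow] at hqg
            exact hqg
      · intro hco
        rcases hco with hip | hqf
        · subst hip; omega
        · have := hstr.2.2.1 i; omega
    · omega
    · exact part_finite hstr.1 (f h.1)
  have hcle : conj f (f h.1) ≤ h.1 := by
    apply conj_le
    intro i hi
    by_contra hip
    push_neg at hip
    have := hfdec h.1 i hip
    omega
  -- new cell is in bdry g
  have hnew : ((h.1, f h.1) : Cell) ∈ bdry k g := by
    constructor
    · show f h.1 < g h.1; omega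
    · show (g h.1 - f h.1) + (conj g (f h.1) - h.1) - 1 ≤ k
      omega
  -- no cell of row h.1 in f has hook exactly k
  have hnok : ∀ j, j < f h.1 → hook f (h.1, j) ≠ k := by
    intro j hj hkk
    apply hB0
    refine ⟨h, (h.1, j), hh, ⟨⟨hj, le_of_eq hkk⟩, rfl, ?_⟩, hkk⟩
    intro c hcb
    by_contra hcj
    push_neg at hcj
    have hlt : hook f (h.1, j) < hook f (h.1, c) := hook_row_lt hstr.1 hcj hj
    have h2 := hcb.2
    omega
  -- hook in g on old cells is hook in f + 1
  have hhg : ∀ j, j < f h.1 → hook g (h.1, j) = hook f (h.1, j) + 1 := by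
    intro j hj
    have hcj : conj g j = conj f j := conj_eq_low hstr hh (by omega)
    show (g h.1 - j) + (conj g j - h.1) - 1 = (f h.1 - j) + (conj f j - h.1) - 1 + 1
    rw [hcj]
    omega
  -- the boundary of row h.1 in g is that of f plus the new cell
  apply natcard_insert (f h.1)
  · intro j
    constructor
    · rintro ⟨hc, hkk⟩
      have hjq : j < f h.1 + 1 := by
        have : j < g h.1 := hc
        omega
      by_cases hjq' : j = f h.1
      · exact Or.inl hjq'
      · right
        have hj : j < f h.1 := by omega
        refine ⟨hj, ?_⟩
        have h3 := hhg j hj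
        have hgk : hook g (h.1, j) ≤ k := hkk
        omega
    · intro hco
      rcases hco with hjq | ⟨hc, hkk⟩
      · subst hjq; exact hnew
      · have hj : j < f h.1 := hc
        refine ⟨by show j < g h.1; omega, ?_⟩
        have hne := hnok j hj
        have h3 := hhg j hj
        show hook g (h.1, j) ≤ k
        omega
  · rintro ⟨hc, -⟩
    have : f h.1 < f h.1 := hc
    omega
  · apply Set.Finite.subset (Set.finite_Iio (f h.1))
    rintro j ⟨hc, -⟩
    exact hc

end MainLems

end Statement15Aux

/-- every `λ`-augmentation column move of a strip `μ/λ` has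
rank 1. -/
theorem statement_15 (k : ℕ) (hk : 2 ≤ k) (lam mu nu : ℕ → ℕ)
    (hS : IsStripAny k lam mu) (M : PreMove k mu nu) (hM : M.IsColMove)
    (hAug : IsStripAny k lam nu) : M.rank = 1 := by
  by_contra hr1
  have hr2 : 2 ≤ M.rank := by have := M.rank_pos; omega
  obtain ⟨rν, hstripν⟩ := hAug
  obtain ⟨rμ, hstripμ⟩ := hS
  have hCT := hM.1
  have hB0 : ∀ i, i < M.rank → ¬ B0HookK k (M.shape i) (M.strs i) :=
    fun i hi => (hCT i hi).1
  -- shapes are monotone along the chain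
  have hmono : ∀ i j, i ≤ j → j ≤ M.rank → ∀ σ, M.shape i σ ≤ M.shape j σ := by
    intro i j
    induction j with
    | zero =>
      intro hij _ σ
      have hi0 : i = 0 := by omega
      subst hi0; exact le_rfl
    | succ n ih =>
      intro hij hnr σ
      rcases Nat.lt_or_ge i (n + 1) with hlt | hge
      · exact le_trans (ih (by omega) (by omega) σ) ((M.isStr n (by omega)).2.2.1 σ)
      · have : i = n + 1 := by omega
        subst this; exact le_rfl
  -- cells of the strings lie in nu \ lam
  have hstrcells : ∀ i, i < M.rank → ∀ x ∈ M.strs i, x ∈ cellsOf nu \ cellsOf lam := by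
    intro i hi x hx
    have hxd := string_mem_diff (M.isStr i hi) hx
    constructor
    · have h1 : x.2 < M.shape (i + 1) x.1 := hxd.1
      have h2 : M.shape (i + 1) x.1 ≤ M.shape M.rank x.1 :=
        hmono (i + 1) M.rank (by omega) le_rfl x.1
      rw [M.shape_rank] at h2
      show x.2 < nu x.1
      omega
    · intro hxl
      apply hxd.2
      have h0 : lam x.1 ≤ mu x.1 := hstripμ.2.2.1 x.1
      have h1 : M.shape 0 x.1 ≤ M.shape i x.1 := hmono 0 i (by omega) (by omega) x.1
      rw [M.shape_zero] at h1
      show x.2 < M.shape i x.1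
      have : x.2 < lam x.1 := hxl
      omega
  have hcols : ∀ i, i < M.rank → ∀ x ∈ M.strs i, ∀ y ∈ M.strs i, x.2 = y.2 → x = y :=
    fun i hi x hx y hy hxy =>
      hstripν.2.2.2.1 x y (hstrcells i hi x hx) (hstrcells i hi y hy) hxy
  -- heads and last elements of the strings
  have hneq : ∀ i, i < M.rank → M.strs i ≠ [] := fun i hi => (M.isStr i hi).2.2.2.1
  have hlast : ∀ i, i < M.rank → ∃ x, (M.strs i).getLast? = some x := by
    intro i hi
    cases hx : (M.strs i).getLast? with
    | none => exact absurd (List.getLast?_eq_none_iff.mp hx) (hneq i hi)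
    | some x => exact ⟨x, rfl⟩
  have hhead : ∀ i, i < M.rank → ∃ x, (M.strs i).head? = some x := by
    intro i hi
    cases hx : (M.strs i).head? with
    | none => exact absurd (List.head?_eq_none_iff.mp hx) (hneq i hi)
    | some x => exact ⟨x, rfl⟩
  -- rows of the bottom cells are consecutive
  have hlastrow : ∀ j, j < M.rank → ∀ x0 xj, (M.strs 0).getLast? = some x0 →
      (M.strs j).getLast? = some xj → xj.1 = x0.1 + j := by
    intro j
    induction j with
    | zero =>
      intro _ x0 xj h1 h2
      rw [h1, Option.some.injEq] at h2
      subst h2; omega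
    | succ n ih =>
      intro hj x0 xj h0 hxj
      obtain ⟨xn, hxn⟩ := hlast n (by omega)
      have hn := ih (by omega) x0 xn h0 hxn
      have hstep := hM.2 n (by omega) xn xj hxn hxj
      omega
  obtain ⟨h0, hh0⟩ := hhead 0 M.rank_pos
  obtain ⟨x0, hx0⟩ := hlast 0 M.rank_pos
  -- head rows of the strings are consecutive
  have hpair : ∀ j, j < M.rank → ∀ hj', (M.strs j).head? = some hj' → hj'.1 = h0.1 + j := by
    intro j hjr hj' hhj
    obtain ⟨v, hlen, hcell, hrs, hcs⟩ := M.translates 0 M.rank_pos j hjr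
    obtain ⟨xj, hxj⟩ := hlast j hjr
    have hL0 : (M.strs 0).length = M.len := M.strLen 0 M.rank_pos
    have hLj : (M.strs j).length = M.len := M.strLen j hjr
    have e0 : (M.strs 0)[M.len - 1]? = some x0 := by
      rw [← hL0, ← List.getLast?_eq_getElem?]; exact hx0
    have ej : (M.strs j)[M.len - 1]? = some xj := by
      rw [← hLj, ← List.getLast?_eq_getElem?]; exact hxj
    have hvx := (hcell (M.len - 1) x0 xj e0 ej).1
    have hrow : xj.1 = x0.1 + j := hlastrow j hjr x0 xj hx0 hxj
    have e0' : (M.strs 0)[0]? = some h0 := by rw [← List.head?_eq_getElem?]; exact hh0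
    have ej' : (M.strs j)[0]? = some hj' := by rw [← List.head?_eq_getElem?]; exact hhj
    have hvh := (hcell 0 h0 hj' e0' ej').1
    have hv : v.1 = (j : ℤ) := by rw [hrow] at hvx; push_cast at hvx; omega
    rw [hv] at hvh
    exact_mod_cast hvh
  have hk1 : 1 ≤ k := by omega
  -- string 0 increases rs at its head row
  have hΔ0 : rsK k (M.shape 1) h0.1 = rsK k (M.shape 0) h0.1 + 1 :=
    rs_head hk1 (M.isStr 0 M.rank_pos) (hB0 0 M.rank_pos) (hcols 0 M.rank_pos) hh0
  -- rs at the top row P is unchanged by all strings but the last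
  have hchainP : ∀ i, i ≤ M.rank - 1 →
      rsK k (M.shape i) (h0.1 + (M.rank - 1)) = rsK k (M.shape 0) (h0.1 + (M.rank - 1)) := by
    intro i
    induction i with
    | zero => intro _; rfl
    | succ n ih =>
      intro hn
      have hnr : n < M.rank := by omega
      obtain ⟨hn', hhn'⟩ := hhead n hnr
      have hrown : hn'.1 = h0.1 + n := hpair n hnr hn' hhn'
      have hab := rs_above (M.isStr n hnr) hhn' (σ := h0.1 + (M.rank - 1)) (by omega)
      rw [hab, ih (by omega)]
  -- the last string increases rs at the top row P
  obtain ⟨hL, hhL⟩ := hhead (M.rank - 1) (by omega)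
  have hLrow : hL.1 = h0.1 + (M.rank - 1) := hpair _ (by omega) hL hhL
  have hΔL : rsK k (M.shape (M.rank - 1 + 1)) hL.1 = rsK k (M.shape (M.rank - 1)) hL.1 + 1 :=
    rs_head hk1 (M.isStr (M.rank - 1) (by omega)) (hB0 _ (by omega)) (hcols _ (by omega)) hhL
  have hEq : M.rank - 1 + 1 = M.rank := by omega
  rw [hEq, hLrow] at hΔL
  -- the "modified rows" clause of the translate condition
  obtain ⟨v, hlen, hcell, hrs, hcs⟩ := M.translates 0 M.rank_pos (M.rank - 1) (by omega)
  obtain ⟨xj, hxj⟩ := hlast (M.rank - 1) (by omega)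
  have hL0 : (M.strs 0).length = M.len := M.strLen 0 M.rank_pos
  have hLj : (M.strs (M.rank - 1)).length = M.len := M.strLen _ (by omega)
  have e0 : (M.strs 0)[M.len - 1]? = some x0 := by
    rw [← hL0, ← List.getLast?_eq_getElem?]; exact hx0
  have ej : (M.strs (M.rank - 1))[M.len - 1]? = some xj := by
    rw [← hLj, ← List.getLast?_eq_getElem?]; exact hxj
  have hvx := (hcell (M.len - 1) x0 xj e0 ej).1
  have hrowj : xj.1 = x0.1 + (M.rank - 1) := hlastrow _ (by omega) x0 xj hx0 hxj
  have hv : v.1 = ((M.rank - 1 : ℕ) : ℤ) := by rw [hrowj] at hvx; push_cast at hvx; omega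
  have hz : ∀ f : ℕ → ℕ, ∀ n : ℕ, rsZ k f (n : ℤ) = (rsK k f n : ℤ) := by
    intro f n; simp [rsZ]
  have hne0 : rsZ k (M.shape 1) (h0.1 : ℤ) ≠ rsZ k (M.shape 0) (h0.1 : ℤ) := by
    rw [hz, hz, hΔ0]
    push_cast
    omega
  have hmod2 := (hrs (h0.1 : ℤ)).2 hne0
  rw [hv] at hmod2
  have hcast : ((h0.1 : ℤ) + ((M.rank - 1 : ℕ) : ℤ)) = ((h0.1 + (M.rank - 1) : ℕ) : ℤ) := by
    push_cast; ring
  rw [hz, hcast, hz] at hmod2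
  have hmodN : rsK k (M.shape 0) h0.1 = rsK k (M.shape (M.rank - 1)) (h0.1 + (M.rank - 1)) := by
    exact_mod_cast hmod2
  have hP0 : rsK k (M.shape (M.rank - 1)) (h0.1 + (M.rank - 1))
      = rsK k (M.shape 0) (h0.1 + (M.rank - 1)) := hchainP _ le_rfl
  have hμdec := M.src_kshape.2.1
  have hνdec := M.tgt_kshape.2.1
  have hlamdec := hstripν.1.2.1
  have hlammu := hstripμ.2.2.2.2.1
  have hocc : OneCellPerCol (rsK k lam) (rsK k nu) := hstripν.2.2.2.2.2.1
  rw [M.shape_zero] at hmodN hP0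
  rw [M.shape_rank] at hΔL
  set P := h0.1 + (M.rank - 1) with hPd
  -- interlacing from the strip nu/lam
  have hinter : rsK k nu P ≤ rsK k lam (P - 1) := by
    by_contra hcon
    push_neg at hcon
    have hx : ((P - 1, rsK k lam (P - 1)) : Cell) ∈ cellsOf (rsK k nu) \ cellsOf (rsK k lam) := by
      constructor
      · show rsK k lam (P - 1) < rsK k nu (P - 1)
        have := hνdec (P - 1) P (by omega)
        omega
      · show ¬ (rsK k lam (P - 1) < rsK k lam (P - 1)); omega
    have hy : ((P, rsK k lam (P - 1)) : Cell) ∈ cellsOf (rsK k nu) \ cellsOf (rsK k lam) := by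
      constructor
      · exact hcon
      · show ¬ (rsK k lam (P - 1) < rsK k lam P)
        have := hlamdec (P - 1) P (by omega)
        omega
    have heq := hocc _ _ hx hy rfl
    have : P - 1 = P := congrArg Prod.fst heq
    omega
  have c1 : rsK k lam (P - 1) ≤ rsK k mu (P - 1) := hlammu _
  have c2 : rsK k mu (P - 1) ≤ rsK k mu h0.1 := hμdec h0.1 (P - 1) (by omega)
  omega
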